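/- For every Q, Q' : 𝒳×𝒜 → ℝ and every μ ∈ Δ(𝒳), ‖P₂(Q,μ) − P₂(Q',μ)‖₁ ≤ φ|𝒜|·‖Q − Q'‖∞. -/

import Mathlib

open Finset Filter
open scoped Classical

noncomputable section

variable {X A : Type*}

/-- A probability vector on a finite set. -/
def IsProb [Fintype X] (μ : X → ℝ) : Prop := (∀ x, 0 ≤ μ x) ∧ ∑ x, μ x = 1

/-- ℓ¹ norm of a signed measure / vector on a finite set. -/
def l1 [Fintype X] (μ : X → ℝ) : ℝ := ∑ x, |μ x|

/-- Sup norm of a Q-table. -/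
def supQ [Fintype X] [Fintype A] [Nonempty X] [Nonempty A] (Q : X → A → ℝ) : ℝ :=
  Finset.univ.sup' Finset.univ_nonempty (fun xa : X × A => |Q xa.1 xa.2|)

/-- Minimum of a row of a Q-table (minimum over actions). -/
def minRow [Fintype A] [Nonempty A] (q : A → ℝ) : ℝ :=
  Finset.univ.inf' Finset.univ_nonempty q

/-- The soft-min distribution over actions with parameter φ. -/
def softmin [Fintype A] (φ : ℝ) (z : A → ℝ) (a : A) : ℝ :=
  Real.exp (-φ * z a) / ∑ a', Real.exp (-φ * z a')

/-- The argmin_e policy: uniform over the minimizers, zero elsewhere. -/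
def argminE [Fintype A] [Nonempty A] (q : A → ℝ) (a : A) : ℝ :=
  if q a = minRow q then (1 : ℝ) / (Finset.univ.filter fun a' => q a' = minRow q).card else 0

/-- (P^{π,μ} ν)(x) = ∑_{x'} ν(x') ∑_a π(a|x') p(x|x',a,μ). -/
def Ppush [Fintype X] [Fintype A] (p : X → A → (X → ℝ) → X → ℝ)
    (π : X → A → ℝ) (μ ν : X → ℝ) (x : X) : ℝ :=
  ∑ x', ν x' * ∑ a, π x' a * p x' a μ x

/-- P₂(Q,μ) = P^{softmin_φ Q, μ} μ − μ. -/
def P2 [Fintype X] [Fintype A] (φ : ℝ) (p : X → A → (X → ℝ) → X → ℝ)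
    (Q : X → A → ℝ) (μ : X → ℝ) (x : X) : ℝ :=
  Ppush p (fun x' => softmin φ (Q x')) μ μ x - μ x

/-- The Bellman operator (B_μ Q)(x,a) = f(x,a,μ) + γ ∑_{x'} p(x'|x,a,μ) min_{a'} Q(x',a'). -/
def bell [Fintype X] [Fintype A] [Nonempty A]
    (f : X → A → (X → ℝ) → ℝ) (p : X → A → (X → ℝ) → X → ℝ) (γ : ℝ)
    (μ : X → ℝ) (Q : X → A → ℝ) (x : X) (a : A) : ℝ :=
  f x a μ + γ * ∑ x', p x a μ x' * minRow (Q x')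

/-- T₂(Q,μ) = B_μ Q − Q. -/
def T2 [Fintype X] [Fintype A] [Nonempty A]
    (f : X → A → (X → ℝ) → ℝ) (p : X → A → (X → ℝ) → X → ℝ) (γ : ℝ)
    (Q : X → A → ℝ) (μ : X → ℝ) (x : X) (a : A) : ℝ :=
  bell f p γ μ Q x a - Q x a

lemma abs_softmin_sub_softmin_le [Fintype A] [Nonempty A] (φ ε : ℝ) (hφ : 0 < φ) (hε : 0 ≤ ε)
    (z z' : A → ℝ) (h : ∀ b, |z b - z' b| ≤ ε) (a : A) :
    |softmin φ z a - softmin φ z' a| ≤ φ * ε := by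
  set d : A → ℝ := fun b => z' b - z b with hd
  set g : ℝ → A → ℝ := fun t b => Real.exp (-φ * (z b + t * d b)) with hg
  set S : ℝ → ℝ := fun t => ∑ b, g t b with hS
  have hgpos : ∀ t b, 0 < g t b := fun t b => Real.exp_pos _
  have hSpos : ∀ t, 0 < S t := fun t => Finset.sum_pos (fun b _ => hgpos t b) Finset.univ_nonempty
  set F : ℝ → ℝ := fun t => g t a / S t with hF
  set D : ℝ → ℝ := fun t =>
    ((-φ * d a * g t a) * S t - g t a * (∑ b, -φ * d b * g t b)) / (S t)^2 with hD
  have hderiv : ∀ t, HasDerivAt F (D t) t := by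
    intro t
    have hb : ∀ b, HasDerivAt (fun t => g t b) (-φ * d b * g t b) t := by
      intro b
      have h1 : HasDerivAt (fun t : ℝ => -φ * (z b + t * d b)) (-φ * d b) t := by
        have h2 := (((hasDerivAt_id t).mul_const (d b)).const_add (z b)).const_mul (-φ)
        simpa using h2
      simpa [hg, mul_comm] using h1.exp
    have hSd : HasDerivAt S (∑ b, -φ * d b * g t b) t := by
      have h := HasDerivAt.sum (u := Finset.univ) (fun b _ => hb b)
      have e : (∑ i ∈ Finset.univ, fun t => g t i) = S := by
        ext t'
        simp [hS, Finset.sum_apply]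
      rw [e] at h
      exact h
    exact (hb a).div hSd (hSpos t).ne'
  have habsd : ∀ b, |d b| ≤ ε := by
    intro b
    have := h b
    rw [abs_sub_comm] at this
    simpa [hd] using this
  have hbound : ∀ t, |D t| ≤ φ * ε := by
    intro t
    have hnum : (-φ * d a * g t a) * S t - g t a * (∑ b, -φ * d b * g t b)
        = φ * g t a * ∑ b, (d b - d a) * g t b := by
      have : S t = ∑ b, g t b := rfl
      rw [this, Finset.mul_sum, Finset.mul_sum, Finset.mul_sum, ← Finset.sum_sub_distrib]
      exact Finset.sum_congr rfl (fun b _ => by ring)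
    have hsum : |∑ b, (d b - d a) * g t b| ≤ 2 * ε * (S t - g t a) := by
      have herase : ∑ b, (d b - d a) * g t b = ∑ b ∈ Finset.univ.erase a, (d b - d a) * g t b :=
        (Finset.sum_erase Finset.univ (by simp)).symm
      rw [herase]
      calc |∑ b ∈ Finset.univ.erase a, (d b - d a) * g t b|
          ≤ ∑ b ∈ Finset.univ.erase a, |(d b - d a) * g t b| := Finset.abs_sum_le_sum_abs _ _
        _ ≤ ∑ b ∈ Finset.univ.erase a, 2 * ε * g t b := by
            apply Finset.sum_le_sum
            intro b _
            rw [abs_mul, abs_of_pos (hgpos t b)]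
            apply mul_le_mul_of_nonneg_right _ (hgpos t b).le
            calc |d b - d a| ≤ |d b| + |d a| := abs_sub _ _
              _ ≤ 2 * ε := by linarith [habsd b, habsd a]
        _ = 2 * ε * (S t - g t a) := by
            rw [← Finset.mul_sum]
            congr 1
            have : S t = g t a + ∑ b ∈ Finset.univ.erase a, g t b :=
              (Finset.add_sum_erase _ _ (Finset.mem_univ a)).symm
            linarith
    rw [hD]
    simp only []
    rw [abs_div, hnum, abs_of_pos (by positivity : (0:ℝ) < (S t)^2)]
    rw [div_le_iff₀ (by positivity)]
    have h1 : |φ * g t a * ∑ b, (d b - d a) * g t b| = φ * g t a * |∑ b, (d b - d a) * g t b| := by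
      rw [abs_mul, abs_of_pos (by positivity : (0:ℝ) < φ * g t a)]
    rw [h1]
    have hga := hgpos t a
    have hgaS : g t a ≤ S t := by
      have : S t = g t a + ∑ b ∈ Finset.univ.erase a, g t b :=
        (Finset.add_sum_erase _ _ (Finset.mem_univ a)).symm
      have : 0 ≤ ∑ b ∈ Finset.univ.erase a, g t b :=
        Finset.sum_nonneg (fun b _ => (hgpos t b).le)
      linarith [(Finset.add_sum_erase (Finset.univ) (g t) (Finset.mem_univ a)).symm]
    have h2 : φ * g t a * |∑ b, (d b - d a) * g t b| ≤ φ * g t a * (2 * ε * (S t - g t a)) :=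
      mul_le_mul_of_nonneg_left hsum (by positivity)
    have h3 : φ * g t a * (2 * ε * (S t - g t a)) ≤ φ * ε * (S t)^2 := by
      have hkey : (0:ℝ) ≤ (S t)^2 - 2 * g t a * (S t - g t a) := by
        nlinarith [sq_nonneg (S t - g t a), sq_nonneg (g t a)]
      have hkey2 := mul_nonneg (mul_nonneg hφ.le hε) hkey
      nlinarith [hkey2]
    linarith
  have hMVT := norm_image_sub_le_of_norm_deriv_le_segment'
    (f := F) (f' := D) (a := (0:ℝ)) (b := 1) (C := φ * ε)
    (fun t _ => (hderiv t).hasDerivWithinAt)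
    (fun t _ => by simpa [Real.norm_eq_abs] using hbound t)
    1 (by norm_num)
  have hF0 : F 0 = softmin φ z a := by
    simp [hF, hg, hS, softmin]
  have hF1 : F 1 = softmin φ z' a := by
    have hz : ∀ b, -φ * (z b + 1 * d b) = -φ * z' b := by
      intro b; simp only [hd]; ring
    simp only [hF, hg, hS, softmin, hz]
  rw [abs_sub_comm]
  calc |softmin φ z' a - softmin φ z a| = ‖F 1 - F 0‖ := by rw [hF0, hF1, Real.norm_eq_abs]
    _ ≤ φ * ε * (1 - 0) := hMVT
    _ = φ * ε := by ring

/-- the map Q ↦ P₂(Q,μ) is Lipschitz: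
‖P₂(Q,μ) − P₂(Q',μ)‖₁ ≤ φ|𝒜|‖Q − Q'‖∞. -/
theorem P2_lipschitz_in_Q [Fintype X] [Fintype A] [Nonempty X] [Nonempty A]
    (φ : ℝ) (hφ : 0 < φ)
    (p : X → A → (X → ℝ) → X → ℝ)
    (hp0 : ∀ x a μ x', IsProb μ → 0 ≤ p x a μ x')
    (hp1 : ∀ x a μ, IsProb μ → ∑ x', p x a μ x' = 1)
    (Q Q' : X → A → ℝ) (μ : X → ℝ) (hμ : IsProb μ) :
    l1 (fun x => P2 φ p Q μ x - P2 φ p Q' μ x)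
      ≤ φ * (Fintype.card A : ℝ) * supQ (fun x a => Q x a - Q' x a) := by
  set ε := supQ (fun x a => Q x a - Q' x a) with hεdef
  have hεle : ∀ x a, |Q x a - Q' x a| ≤ ε := fun x a =>
    Finset.le_sup' (fun xa : X × A => |Q xa.1 xa.2 - Q' xa.1 xa.2|) (Finset.mem_univ (x, a))
  have hε0 : 0 ≤ ε :=
    (abs_nonneg _).trans (hεle (Classical.arbitrary X) (Classical.arbitrary A))
  have hsm : ∀ x' a, |softmin φ (Q x') a - softmin φ (Q' x') a| ≤ φ * ε := fun x' a =>
    abs_softmin_sub_softmin_le φ ε hφ hε0 (Q x') (Q' x') (fun b => hεle x' b) a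
  have hdiff : ∀ x, P2 φ p Q μ x - P2 φ p Q' μ x
      = ∑ x', μ x' * ∑ a, (softmin φ (Q x') a - softmin φ (Q' x') a) * p x' a μ x := by
    intro x
    simp only [P2, Ppush]
    rw [sub_sub_sub_cancel_right, ← Finset.sum_sub_distrib]
    refine Finset.sum_congr rfl fun x' _ => ?_
    rw [← mul_sub, ← Finset.sum_sub_distrib]
    congr 1
    refine Finset.sum_congr rfl fun a _ => ?_
    ring
  calc l1 (fun x => P2 φ p Q μ x - P2 φ p Q' μ x)
      = ∑ x, |∑ x', μ x' * ∑ a, (softmin φ (Q x') a - softmin φ (Q' x') a) * p x' a μ x| := by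
        unfold l1
        exact Finset.sum_congr rfl fun x _ => by simp only []; rw [hdiff x]
    _ ≤ ∑ x, ∑ x', μ x' * ∑ a, |softmin φ (Q x') a - softmin φ (Q' x') a| * p x' a μ x := by
        refine Finset.sum_le_sum fun x _ => ?_
        refine (Finset.abs_sum_le_sum_abs _ _).trans (Finset.sum_le_sum fun x' _ => ?_)
        rw [abs_mul, abs_of_nonneg (hμ.1 x')]
        refine mul_le_mul_of_nonneg_left ?_ (hμ.1 x')
        refine (Finset.abs_sum_le_sum_abs _ _).trans (Finset.sum_le_sum fun a _ => ?_)
        rw [abs_mul, abs_of_nonneg (hp0 x' a μ x hμ)]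
    _ = ∑ x', μ x' * ∑ a, |softmin φ (Q x') a - softmin φ (Q' x') a| := by
        rw [Finset.sum_comm]
        refine Finset.sum_congr rfl fun x' _ => ?_
        rw [← Finset.mul_sum]
        congr 1
        rw [Finset.sum_comm]
        calc ∑ a, ∑ x, |softmin φ (Q x') a - softmin φ (Q' x') a| * p x' a μ x
            = ∑ a, |softmin φ (Q x') a - softmin φ (Q' x') a| * ∑ x, p x' a μ x := by
              exact Finset.sum_congr rfl fun a _ => (Finset.mul_sum _ _ _).symm
          _ = ∑ a, |softmin φ (Q x') a - softmin φ (Q' x') a| := by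
              refine Finset.sum_congr rfl fun a _ => ?_
              rw [hp1 x' a μ hμ, mul_one]
    _ ≤ ∑ x', μ x' * ((Fintype.card A : ℝ) * (φ * ε)) := by
        refine Finset.sum_le_sum fun x' _ => mul_le_mul_of_nonneg_left ?_ (hμ.1 x')
        calc ∑ a, |softmin φ (Q x') a - softmin φ (Q' x') a| ≤ ∑ _a : A, φ * ε :=
              Finset.sum_le_sum fun a _ => hsm x' a
          _ = (Fintype.card A : ℝ) * (φ * ε) := by
              simp [Finset.sum_const, nsmul_eq_mul, Finset.card_univ]
    _ = φ * (Fintype.card A : ℝ) * ε := by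
        rw [← Finset.sum_mul, hμ.2, one_mul]; ring
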